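/- arXiv:1409.0141 — 2 statements merged into one kernel-verified Lean document; each statement's English description precedes it below -/
import Mathlib

section
/- Let T be the ℵ₀-regular tree, t ∈ T, and 1 < p ≤ ∞. Then every linear operator S : ℓ_p(T) → ℂ^T commuting with λ(g) for all g ∈ Aut(T)_t maps ℓ_p(T \ {t}) into ℂ^{T\{t}} (functions vanishing at t). Consequently, ℓ_p(T \ {t}) is the unique λ(Aut(T)_t)-invariant linear complement of ℂ·𝟙_t in ℓ_p(T). -/
open scoped ENNReal

noncomputable section

/-- The vertex set of the `ℵ₀`-regular tree, realised as the free group `F_∞`. -/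
abbrev V : Type := FreeGroup ℕ

/-- The Cayley graph of `F_∞` with respect to its free generating set:
the `ℵ₀`-regular tree `T`. -/
def treeGraph : SimpleGraph V :=
  SimpleGraph.fromRel (fun s t => ∃ i : ℕ, t = s * FreeGroup.of i)

/-- The automorphism group `Aut(T)` of the `ℵ₀`-regular tree. -/
abbrev TreeAut := treeGraph ≃g treeGraph

/-- `ℓ_p(T)`. -/
abbrev lpT (p : ℝ≥0∞) := lp (fun _ : V => ℂ) p

lemma memℓp_comp {p : ℝ≥0∞} (g : V ≃ V) {x : V → ℂ} (h : Memℓp x p) :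
    Memℓp (fun v => x (g v)) p := by
  rcases ENNReal.trichotomy p with rfl | rfl | hp
  · rw [memℓp_zero_iff] at h ⊢
    exact Set.Finite.preimage g.injective.injOn h
  · rw [memℓp_infty_iff] at h ⊢
    apply h.mono
    rintro r ⟨v, rfl⟩
    exact ⟨g v, rfl⟩
  · apply memℓp_gen
    exact (g.summable_iff (f := fun v => ‖x v‖ ^ p.toReal)).2 ((memℓp_gen_iff hp).1 h)

/-- The shift representation of permutations of `T` on `ℂ^T`: `λ(g)x = x(g⁻¹ ·)`. -/
def lamFull (g : V ≃ V) : (V → ℂ) →ₗ[ℂ] (V → ℂ) where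
  toFun x := fun v => x (g.symm v)
  map_add' _ _ := rfl
  map_smul' _ _ := rfl

/-- The shift representation of permutations of `T` on `ℓ_p(T)`: `λ(g)x = x(g⁻¹ ·)`. -/
def lam (p : ℝ≥0∞) (g : V ≃ V) : lpT p →ₗ[ℂ] lpT p where
  toFun x := ⟨fun v => x (g.symm v), memℓp_comp g.symm (lp.memℓp x)⟩
  map_add' _ _ := rfl
  map_smul' _ _ := rfl

attribute [local instance] Classical.propDecidable


-- permutations
def tau : Equiv.Perm ℕ where
  toFun n := if n % 2 = 0 then n + 1 else n - 1
  invFun n := if n % 2 = 0 then n + 1 else n - 1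
  left_inv n := by dsimp only; split_ifs <;> omega
  right_inv n := by dsimp only; split_ifs <;> omega

def sig1 : Equiv.Perm ℕ where
  toFun n := if n % 2 = 0 then 2 * n else 4 * (n / 2 / 3) + (n / 2) % 3 + 1
  invFun m := if m % 4 = 0 then m / 2 else 6 * (m / 4) + 2 * (m % 4) - 1
  left_inv n := by dsimp only; split_ifs <;> omega
  right_inv m := by dsimp only; split_ifs <;> omega

def sig2 : Equiv.Perm ℕ where
  toFun n := if n % 2 = 0 then 2 * n + 2 else
    (if (n / 2) % 3 = 0 then 4 * (n / 2 / 3) else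
      if (n / 2) % 3 = 1 then 4 * (n / 2 / 3) + 1 else 4 * (n / 2 / 3) + 3)
  invFun m := if m % 4 = 2 then (m - 2) / 2 else
    (if m % 4 = 0 then 6 * (m / 4) + 1 else
      if m % 4 = 1 then 6 * (m / 4) + 3 else 6 * (m / 4) + 5)
  left_inv n := by dsimp only; split_ifs <;> omega
  right_inv m := by dsimp only; split_ifs <;> omega

lemma sig1_even {n : ℕ} (h : n % 2 = 0) : sig1 n % 4 = 0 := by
  simp only [sig1, Equiv.coe_fn_mk, if_pos h]; omega

lemma sig2_even {n : ℕ} (h : n % 2 = 0) : sig2 n % 4 = 2 := by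
  simp only [sig2, Equiv.coe_fn_mk, if_pos h]; omega

lemma tau_odd {n : ℕ} (h : n % 2 = 1) : tau n % 2 = 0 := by
  simp only [tau, Equiv.coe_fn_mk]; split_ifs <;> omega


namespace FreeGroup

lemma reduce_map {α β : Type*} [DecidableEq α] [DecidableEq β] {f : α → β}
    (hf : Function.Injective f) (L : List (α × Bool)) :
    reduce (L.map fun x => (f x.1, x.2)) = (reduce L).map fun x => (f x.1, x.2) := by
  induction L with
  | nil => simp
  | cons hd tl ih =>
    rw [List.map_cons, reduce.cons, reduce.cons, ih]
    cases h : reduce tl with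
    | nil => simp
    | cons hd2 tl2 =>
      simp only [List.map_cons]
      by_cases hc : hd.1 = hd2.1 ∧ hd.2 = !hd2.2
      · rw [if_pos ⟨by simp [hc.1], by simp [hc.2]⟩, if_pos hc]
      · rw [if_neg (by simpa [hf.eq_iff] using hc), if_neg hc]
        simp

lemma toWord_congr (e : ℕ ≃ ℕ) (u : V) :
    (freeGroupCongr e u).toWord = u.toWord.map fun x => (e x.1, x.2) := by
  conv_lhs => rw [freeGroupCongr_apply, ← mk_toWord (x := u), map.mk, toWord_mk,
    reduce_map e.injective, reduce_toWord]

end FreeGroup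

/-- index of the first letter of the reduced word of `t⁻¹ * v` -/
def fiL (t v : V) : Option ℕ := ((t⁻¹ * v).toWord.head?).map Prod.fst

lemma fiL_eq_none {t v : V} : fiL t v = none ↔ v = t := by
  rw [fiL, Option.map_eq_none_iff, List.head?_eq_none_iff, FreeGroup.toWord_eq_nil_iff,
    inv_mul_eq_one, eq_comm]

/-- the conjugated relabelling automorphism as an equivalence of `V` -/
def conjEquiv (t : V) (e : ℕ ≃ ℕ) : V ≃ V :=
  (Equiv.mulLeft t⁻¹).trans (((FreeGroup.freeGroupCongr e).toEquiv).trans (Equiv.mulLeft t))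

lemma conjEquiv_apply (t : V) (e : ℕ ≃ ℕ) (v : V) :
    conjEquiv t e v = t * FreeGroup.freeGroupCongr e (t⁻¹ * v) := rfl

lemma conjEquiv_symm (t : V) (e : ℕ ≃ ℕ) : (conjEquiv t e).symm = conjEquiv t e.symm := by
  ext v
  rw [Equiv.symm_apply_eq]
  rw [conjEquiv_apply, conjEquiv_apply, inv_mul_cancel_left]
  have h : FreeGroup.freeGroupCongr e (FreeGroup.freeGroupCongr e.symm (t⁻¹ * v)) = t⁻¹ * v := by
    rw [← FreeGroup.freeGroupCongr_symm]; exact MulEquiv.apply_symm_apply _ _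
  rw [h, mul_inv_cancel_left]

lemma conjEquiv_fixes (t : V) (e : ℕ ≃ ℕ) : conjEquiv t e t = t := by
  simp [conjEquiv_apply]

lemma fiL_conjEquiv (t : V) (e : ℕ ≃ ℕ) (v : V) :
    fiL t (conjEquiv t e v) = (fiL t v).map e := by
  simp only [fiL, conjEquiv_apply, inv_mul_cancel_left, FreeGroup.toWord_congr,
    List.head?_map, Option.map_map]
  rfl

/-- the conjugated relabelling automorphism as a graph automorphism -/
def conjAut (t : V) (e : ℕ ≃ ℕ) : TreeAut where
  toEquiv := conjEquiv t e
  map_rel_iff' := by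
    intro u v
    have key : ∀ (u v : V), (∃ i : ℕ, conjEquiv t e v = conjEquiv t e u * FreeGroup.of i) ↔
        ∃ i : ℕ, v = u * FreeGroup.of i := by
      intro u v
      constructor
      · rintro ⟨i, hi⟩
        refine ⟨e.symm i, ?_⟩
        rw [conjEquiv_apply, conjEquiv_apply] at hi
        rw [mul_assoc] at hi
        have h1 : FreeGroup.freeGroupCongr e (t⁻¹ * v) =
            FreeGroup.freeGroupCongr e (t⁻¹ * u) * FreeGroup.of i := mul_left_cancel hi
        have h3 : FreeGroup.freeGroupCongr e (t⁻¹ * (u * FreeGroup.of (e.symm i))) =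
            FreeGroup.freeGroupCongr e (t⁻¹ * u) * FreeGroup.of i := by
          rw [← mul_assoc, map_mul]
          congr 1
          simp [FreeGroup.freeGroupCongr_apply, FreeGroup.map.of]
        have h4 := (FreeGroup.freeGroupCongr e).injective (h1.trans h3.symm)
        exact mul_left_cancel h4
      · rintro ⟨i, rfl⟩
        refine ⟨e i, ?_⟩
        rw [conjEquiv_apply, conjEquiv_apply, mul_assoc, mul_left_cancel_iff, ← mul_assoc,
          map_mul, mul_left_cancel_iff]
        simp [FreeGroup.freeGroupCongr_apply, FreeGroup.map.of]
    simp only [treeGraph, SimpleGraph.fromRel_adj, RelIso.coe_fn_toEquiv]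
    rw [key, key, (conjEquiv t e).injective.ne_iff]

lemma conjAut_fixes (t : V) (e : ℕ ≃ ℕ) : conjAut t e t = t := conjEquiv_fixes t e

lemma conjAut_toEquiv (t : V) (e : ℕ ≃ ℕ) : (conjAut t e).toEquiv = conjEquiv t e := rfl

lemma lam_apply {p : ℝ≥0∞} (g : V ≃ V) (x : lpT p) (v : V) :
    (lam p g x : V → ℂ) v = x (g.symm v) := rfl

lemma lam_comp {p : ℝ≥0∞} (g₁ g₂ : V ≃ V) (x : lpT p) :
    lam p g₁ (lam p g₂ x) = lam p (g₂.trans g₁) x := by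
  apply lp.ext
  funext v
  rfl

lemma conjEquiv_trans (t : V) (e₁ e₂ : ℕ ≃ ℕ) :
    (conjEquiv t e₁).trans (conjEquiv t e₂) = conjEquiv t (e₁.trans e₂) := by
  ext v
  simp only [Equiv.trans_apply, conjEquiv_apply, inv_mul_cancel_left]
  rw [← FreeGroup.freeGroupCongr_trans]
  rfl

lemma rpow_cancel_le {a b r : ℝ} (hr : 0 < r) (ha : 0 ≤ a) (hb : 0 ≤ b)
    (h : a ^ r ≤ b ^ r) : a ≤ b := by
  by_contra hab
  push_neg at hab
  exact absurd h (not_le.2 (Real.rpow_lt_rpow hb hab hr))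

lemma lam_refl {p : ℝ≥0∞} (x : lpT p) : lam p (Equiv.refl V) x = x := by
  apply lp.ext; funext v; rfl

lemma norm_lam_eq {p : ℝ≥0∞} [Fact (1 ≤ p)] (g : V ≃ V) (x : lpT p) :
    ‖lam p g x‖ = ‖x‖ := by
  rcases eq_or_ne p ∞ with rfl | hp'
  · refine le_antisymm ?_ ?_
    · refine lp.norm_le_of_forall_le' _ fun v => ?_
      rw [lam_apply]
      exact lp.norm_apply_le_norm (by simp) x _
    · refine lp.norm_le_of_forall_le' _ fun v => ?_
      have : (x : V → ℂ) v = (lam ∞ g x : V → ℂ) (g v) := by rw [lam_apply]; simp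
      rw [this]
      exact lp.norm_apply_le_norm (by simp) (lam ∞ g x) _
  · have hpr : 0 < p.toReal :=
      ENNReal.toReal_pos (by rintro rfl; exact absurd (Fact.out (p := (1:ℝ≥0∞) ≤ 0)) (by simp)) hp'
    have h1 := lp.hasSum_norm hpr (lam p g x)
    have h2 : HasSum (fun v => ‖(lam p g x : V → ℂ) v‖ ^ p.toReal) (‖x‖ ^ p.toReal) := by
      have := (Equiv.hasSum_iff (g.symm)).2 (lp.hasSum_norm hpr x)
      simpa [Function.comp_def, lam_apply] using this
    have h3 := h1.unique h2
    by_contra hne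
    rcases lt_or_gt_of_ne hne with h | h
    · exact absurd h3 (ne_of_lt (Real.rpow_lt_rpow (norm_nonneg _) h hpr))
    · exact absurd h3.symm (ne_of_lt (Real.rpow_lt_rpow (norm_nonneg _) h hpr))

/-- restriction of an `lp` element to a set -/
def restr (p : ℝ≥0∞) (s : Set V) (x : lpT p) : lpT p :=
  ⟨fun v => if v ∈ s then x v else 0, by
    show Memℓp (fun v => if v ∈ s then (x : V → ℂ) v else 0) p
    have h := lp.memℓp x
    rcases ENNReal.trichotomy p with rfl | rfl | hq
    · rw [memℓp_zero_iff] at h ⊢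
      refine h.subset fun v hv => ?_
      simp only [Function.mem_support] at hv ⊢
      intro h0; apply hv; split_ifs; exact h0; rfl
    · rw [memℓp_infty_iff] at h ⊢
      obtain ⟨C, hC⟩ := h
      refine ⟨max C 0, ?_⟩
      rintro r ⟨v, rfl⟩
      by_cases hv : v ∈ s
      · simp only [hv, if_true]
        exact le_max_of_le_left (hC ⟨v, rfl⟩)
      · simp [hv]
    · apply memℓp_gen
      have hsum := (memℓp_gen_iff hq).1 h
      refine Summable.of_nonneg_of_le (fun v => Real.rpow_nonneg (norm_nonneg _) _)
        (fun v => ?_) hsum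
      by_cases hv : v ∈ s
      · simp [hv]
      · simp only [hv, if_false, norm_zero, Real.zero_rpow (ne_of_gt hq)]
        exact Real.rpow_nonneg (norm_nonneg _) _⟩

lemma restr_apply (p : ℝ≥0∞) (s : Set V) (x : lpT p) (v : V) :
    (restr p s x : V → ℂ) v = if v ∈ s then x v else 0 := rfl

/-- support containment -/
def SuppIn {p : ℝ≥0∞} (s : Set V) (x : lpT p) : Prop :=
  ∀ v, v ∉ s → (x : V → ℂ) v = 0

/-- vertices whose first letter (as seen from `t`) has even index -/
def EvS (t : V) : Set V := {v | ∃ k, fiL t v = some k ∧ k % 2 = 0}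

lemma fiL_symm (t : V) (e : ℕ ≃ ℕ) (v : V) :
    (fiL t ((conjEquiv t e).symm v)).map e = fiL t v := by
  conv_rhs => rw [← Equiv.apply_symm_apply (conjEquiv t e) v]
  rw [fiL_conjEquiv]

/-- the contraction factor -/
def cFac (p : ℝ≥0∞) : ℝ := 2 ^ (1 / p.toReal) / 2

lemma cFac_nonneg (p : ℝ≥0∞) : 0 ≤ cFac p := by
  unfold cFac; positivity

lemma cFac_lt_one {p : ℝ≥0∞} (hp : 1 < p) : cFac p < 1 := by
  unfold cFac
  rcases eq_or_ne p ∞ with rfl | hp'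
  · norm_num
  · have h1 : 1 < p.toReal := by
      rw [← ENNReal.toReal_one]
      exact ENNReal.toReal_strict_mono hp' hp
    have h2 : 1 / p.toReal < 1 := by
      rw [div_lt_one (by linarith)]; exact h1
    have h3 : (2:ℝ) ^ (1 / p.toReal) < 2 ^ (1:ℝ) :=
      Real.rpow_lt_rpow_of_exponent_lt (by norm_num) h2
    rw [Real.rpow_one] at h3
    linarith

/-- `lam` as a continuous linear map -/
def clam (p : ℝ≥0∞) [Fact (1 ≤ p)] (g : V ≃ V) : lpT p →L[ℂ] lpT p :=
  LinearMap.mkContinuous (lam p g) 1 (fun x => by rw [norm_lam_eq, one_mul])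

lemma clam_apply (p : ℝ≥0∞) [Fact (1 ≤ p)] (g : V ≃ V) (x : lpT p) :
    clam p g x = lam p g x := rfl

/-- the averaging operator -/
def Mop (t : V) (p : ℝ≥0∞) [Fact (1 ≤ p)] : lpT p →L[ℂ] lpT p :=
  (2⁻¹ : ℂ) • (clam p (conjEquiv t sig1) + clam p (conjEquiv t sig2))

lemma norm_two_inv_complex : ‖(2⁻¹ : ℂ)‖ = 2⁻¹ := by
  rw [norm_inv]
  norm_num

lemma Mop_apply (t : V) (p : ℝ≥0∞) [Fact (1 ≤ p)] (x : lpT p) :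
    Mop t p x = (2⁻¹ : ℂ) • (lam p (conjEquiv t sig1) x + lam p (conjEquiv t sig2) x) := by
  rw [Mop, ContinuousLinearMap.smul_apply, ContinuousLinearMap.add_apply, clam_apply, clam_apply]

/-- the single contraction step -/
lemma Mop_step {p : ℝ≥0∞} [Fact (1 ≤ p)] (t : V) (x : lpT p) (hx : SuppIn (EvS t) x) :
    SuppIn (EvS t) (Mop t p x) ∧ ‖Mop t p x‖ ≤ cFac p * ‖x‖ := by
  set a := lam p (conjEquiv t sig1) x with ha
  set b := lam p (conjEquiv t sig2) x with hb
  -- support description of a and b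
  have hsa : ∀ v, (a : V → ℂ) v ≠ 0 → ∃ k, fiL t v = some (sig1 k) ∧ k % 2 = 0 := by
    intro v hv
    rw [ha, lam_apply] at hv
    have hmem : (conjEquiv t sig1).symm v ∈ EvS t := by
      by_contra hc
      exact hv (hx _ hc)
    obtain ⟨k, hk, hke⟩ := hmem
    refine ⟨k, ?_, hke⟩
    rw [← fiL_symm t sig1 v, hk]
    rfl
  have hsb : ∀ v, (b : V → ℂ) v ≠ 0 → ∃ k, fiL t v = some (sig2 k) ∧ k % 2 = 0 := by
    intro v hv
    rw [hb, lam_apply] at hv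
    have hmem : (conjEquiv t sig2).symm v ∈ EvS t := by
      by_contra hc
      exact hv (hx _ hc)
    obtain ⟨k, hk, hke⟩ := hmem
    refine ⟨k, ?_, hke⟩
    rw [← fiL_symm t sig2 v, hk]
    rfl
  have hdisj : ∀ v, (a : V → ℂ) v = 0 ∨ (b : V → ℂ) v = 0 := by
    intro v
    by_contra hc
    push_neg at hc
    obtain ⟨k1, hk1, hke1⟩ := hsa v hc.1
    obtain ⟨k2, hk2, hke2⟩ := hsb v hc.2
    rw [hk1, Option.some_inj] at hk2
    have := sig1_even hke1
    have := sig2_even hke2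
    omega
  have hMv : ∀ v, (Mop t p x : V → ℂ) v = 2⁻¹ * ((a : V → ℂ) v + (b : V → ℂ) v) := by
    intro v
    rw [Mop_apply, ← ha, ← hb, lp.coeFn_smul, Pi.smul_apply, lp.coeFn_add, Pi.add_apply,
      smul_eq_mul]
  constructor
  · -- support
    intro v hv
    rw [hMv v]
    have hav : (a : V → ℂ) v = 0 := by
      by_contra hc
      obtain ⟨k, hk, hke⟩ := hsa v hc
      exact hv ⟨sig1 k, hk, by have := sig1_even hke; omega⟩
    have hbv : (b : V → ℂ) v = 0 := by
      by_contra hc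
      obtain ⟨k, hk, hke⟩ := hsb v hc
      exact hv ⟨sig2 k, hk, by have := sig2_even hke; omega⟩
    simp [hav, hbv]
  · -- norm estimate
    have hna : ‖a‖ = ‖x‖ := norm_lam_eq _ _
    have hnb : ‖b‖ = ‖x‖ := norm_lam_eq _ _
    have hptw : ∀ v, ‖(Mop t p x : V → ℂ) v‖ = 2⁻¹ * ‖(a : V → ℂ) v + (b : V → ℂ) v‖ := by
      intro v
      rw [hMv v, norm_mul]
      norm_num
    rcases eq_or_ne p ∞ with rfl | hp'
    · have hc : cFac ∞ = 2⁻¹ := by unfold cFac; norm_num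
      rw [hc]
      refine lp.norm_le_of_forall_le (by positivity) fun v => ?_
      rw [hptw v]
      rcases hdisj v with h | h
      · rw [h, zero_add]
        have := lp.norm_apply_le_norm (p := (∞ : ℝ≥0∞)) (by simp) b v
        rw [hnb] at this
        linarith
      · rw [h, add_zero]
        have := lp.norm_apply_le_norm (p := (∞ : ℝ≥0∞)) (by simp) a v
        rw [hna] at this
        linarith
    · have hpr : 0 < p.toReal :=
        ENNReal.toReal_pos (by rintro rfl; exact absurd (Fact.out (p := (1:ℝ≥0∞) ≤ 0)) (by simp))
          hp'
      set pr := p.toReal with hprdef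
      have hSa := lp.hasSum_norm hpr a
      have hSb := lp.hasSum_norm hpr b
      have hfun : (fun v => ‖(Mop t p x : V → ℂ) v‖ ^ pr) =
          fun v => (2⁻¹ : ℝ) ^ pr * (‖(a : V → ℂ) v‖ ^ pr + ‖(b : V → ℂ) v‖ ^ pr) := by
        funext v
        rw [hptw v, Real.mul_rpow (by norm_num) (norm_nonneg _)]
        congr 1
        rcases hdisj v with h | h
        · rw [h, zero_add, norm_zero, Real.zero_rpow (ne_of_gt hpr), zero_add]
        · rw [h, add_zero, norm_zero, Real.zero_rpow (ne_of_gt hpr), add_zero]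
      have hS : HasSum (fun v => ‖(Mop t p x : V → ℂ) v‖ ^ pr)
          ((2⁻¹ : ℝ) ^ pr * (‖a‖ ^ pr + ‖b‖ ^ pr)) := by
        rw [hfun]
        exact (hSa.add hSb).mul_left _
      have hM := (lp.hasSum_norm hpr (Mop t p x)).unique hS
      refine rpow_cancel_le hpr (norm_nonneg _) (mul_nonneg (cFac_nonneg p) (norm_nonneg _)) ?_
      have hrhs : (cFac p * ‖x‖) ^ pr = (2 / (2:ℝ) ^ pr) * ‖x‖ ^ pr := by
        rw [Real.mul_rpow (cFac_nonneg p) (norm_nonneg _)]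
        congr 1
        unfold cFac
        rw [Real.div_rpow (by positivity) (by norm_num),
          ← Real.rpow_mul (by norm_num), one_div, inv_mul_cancel₀ (ne_of_gt hpr),
          Real.rpow_one]
      rw [hM, hna, hnb, hrhs, Real.inv_rpow (by norm_num)]
      apply le_of_eq
      have h2pr : (0:ℝ) < (2:ℝ) ^ pr := Real.rpow_pos_of_pos (by norm_num) _
      field_simp
      ring

set_option synthInstance.maxHeartbeats 1000000

lemma span_b {p : ℝ≥0∞} [Fact (1 ≤ p)] (hp : 1 < p) (t : V) (x : lpT p)
    (hx : SuppIn (EvS t) x) :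
    ∃ y₁ y₂ : lpT p,
      x = (y₁ - lam p (conjEquiv t sig1) y₁) + (y₂ - lam p (conjEquiv t sig2) y₂) := by
  have hc0 := cFac_nonneg p
  have hc1 := cFac_lt_one hp
  have hn : ∀ n : ℕ, SuppIn (EvS t) ((Mop t p ^ n) x) ∧
      ‖(Mop t p ^ n) x‖ ≤ cFac p ^ n * ‖x‖ := by
    intro n
    induction n with
    | zero =>
      refine ⟨by simpa using hx, by simp⟩
    | succ n ih =>
      have hstep := Mop_step t _ ih.1
      rw [pow_succ']
      constructor
      · simpa [ContinuousLinearMap.mul_apply] using hstep.1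
      · rw [ContinuousLinearMap.mul_apply]
        calc ‖Mop t p ((Mop t p ^ n) x)‖ ≤ cFac p * ‖(Mop t p ^ n) x‖ := hstep.2
          _ ≤ cFac p * (cFac p ^ n * ‖x‖) := by
              exact mul_le_mul_of_nonneg_left ih.2 hc0
          _ = cFac p ^ (n + 1) * ‖x‖ := by ring
  have hsummable : Summable (fun n : ℕ => (Mop t p ^ n) x) := by
    refine Summable.of_norm_bounded
      ((summable_geometric_of_lt_one hc0 hc1).mul_right ‖x‖) fun n => (hn n).2
  set y := ∑' n : ℕ, (Mop t p ^ n) x with hy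
  have hMy : Mop t p y = ∑' n : ℕ, (Mop t p ^ (n + 1)) x := by
    rw [hy, (Mop t p).map_tsum hsummable]
    congr 1
    funext n
    rw [pow_succ', ContinuousLinearMap.mul_apply]
  have hid : y = x + Mop t p y := by
    rw [hMy, hy, hsummable.tsum_eq_zero_add, pow_zero, ContinuousLinearMap.one_apply]
  refine ⟨(2⁻¹ : ℂ) • y, (2⁻¹ : ℂ) • y, ?_⟩
  rw [map_smul, map_smul]
  have hx2 : x = y - Mop t p y := eq_sub_of_add_eq hid.symm
  rw [hx2, Mop_apply]
  module

/-- vertices whose first letter (as seen from `t`) has odd index -/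
def OdS (t : V) : Set V := {v | ∃ k, fiL t v = some k ∧ k % 2 = 1}

lemma tau_invol : tau.trans tau = Equiv.refl ℕ := by
  ext n
  simp only [Equiv.trans_apply, tau, Equiv.coe_fn_mk, Equiv.refl_apply]
  split_ifs <;> omega

lemma tau_tau (n : ℕ) : tau (tau n) = n := by
  have h := Equiv.ext_iff.1 tau_invol n
  simpa using h

lemma tau_conj (e : Equiv.Perm ℕ) : e.trans tau = tau.trans (tau.trans (e.trans tau)) := by
  ext n
  simp only [Equiv.trans_apply]
  rw [tau_tau]

lemma conjEquiv_refl (t : V) : conjEquiv t (Equiv.refl ℕ) = Equiv.refl V := by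
  ext v
  rw [conjEquiv_apply]
  simp [FreeGroup.freeGroupCongr_refl]

lemma lam_conj_tau_invol {p : ℝ≥0∞} (t : V) (x : lpT p) :
    lam p (conjEquiv t tau) (lam p (conjEquiv t tau) x) = x := by
  rw [lam_comp, conjEquiv_trans, tau_invol, conjEquiv_refl, lam_refl]

lemma span_all {p : ℝ≥0∞} [Fact (1 ≤ p)] (hp : 1 < p) (t : V) (x : lpT p)
    (hx : (x : V → ℂ) t = 0) :
    ∃ y₁ y₂ y₃ y₄ : lpT p,
      x = (y₁ - lam p (conjEquiv t sig1) y₁) + (y₂ - lam p (conjEquiv t sig2) y₂)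
        + (y₃ - lam p (conjEquiv t (tau.trans (sig1.trans tau))) y₃)
        + (y₄ - lam p (conjEquiv t (tau.trans (sig2.trans tau))) y₄) := by
  set xE := restr p (EvS t) x with hxE
  set xO := restr p (OdS t) x with hxO
  have hsplit : x = xE + xO := by
    apply lp.ext
    funext v
    rw [lp.coeFn_add, Pi.add_apply, hxE, hxO, restr_apply, restr_apply]
    by_cases hE : v ∈ EvS t
    · have hO : v ∉ OdS t := by
        rintro ⟨k, hk, hk1⟩
        obtain ⟨k', hk', hk0⟩ := hE
        rw [hk, Option.some_inj] at hk'
        omega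
      simp [hE, hO]
    · by_cases hO : v ∈ OdS t
      · simp [hE, hO]
      · have hv0 : (x : V → ℂ) v = 0 := by
          rcases h : fiL t v with _ | k
          · rw [fiL_eq_none.1 h]
            exact hx
          · exfalso
            rcases Nat.even_or_odd k with he | ho
            · exact hE ⟨k, h, Nat.even_iff.1 he⟩
            · exact hO ⟨k, h, Nat.odd_iff.1 ho⟩
        simp [hE, hO, hv0]
  have hxEsupp : SuppIn (EvS t) xE := by
    intro v hv
    rw [hxE, restr_apply, if_neg hv]
  have hxOz : SuppIn (EvS t) (lam p (conjEquiv t tau) xO) := by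
    intro v hv
    rw [lam_apply]
    by_contra hne
    have hmem : (conjEquiv t tau).symm v ∈ OdS t := by
      by_contra hc
      exact hne (by rw [hxO, restr_apply, if_neg hc])
    obtain ⟨k, hk, hk1⟩ := hmem
    refine hv ⟨tau k, ?_, tau_odd hk1⟩
    rw [← fiL_symm t tau v, hk]
    rfl
  obtain ⟨y₁, y₂, h12⟩ := span_b hp t xE hxEsupp
  obtain ⟨z₃, z₄, h34⟩ := span_b hp t (lam p (conjEquiv t tau) xO) hxOz
  have hxO2 : xO = lam p (conjEquiv t tau) (lam p (conjEquiv t tau) xO) :=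
    (lam_conj_tau_invol t xO).symm
  rw [h34, map_add, map_sub, map_sub] at hxO2
  have hc1 : lam p (conjEquiv t tau) (lam p (conjEquiv t sig1) z₃) =
      lam p (conjEquiv t (tau.trans (sig1.trans tau))) (lam p (conjEquiv t tau) z₃) := by
    rw [lam_comp, lam_comp, conjEquiv_trans, conjEquiv_trans, ← tau_conj]
  have hc2 : lam p (conjEquiv t tau) (lam p (conjEquiv t sig2) z₄) =
      lam p (conjEquiv t (tau.trans (sig2.trans tau))) (lam p (conjEquiv t tau) z₄) := by
    rw [lam_comp, lam_comp, conjEquiv_trans, conjEquiv_trans, ← tau_conj]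
  refine ⟨y₁, y₂, lam p (conjEquiv t tau) z₃, lam p (conjEquiv t tau) z₄, ?_⟩
  rw [hsplit, h12, hxO2, hc1, hc2]
  abel

lemma part1 (t : V) (p : ℝ≥0∞) (hp : 1 < p)
    (S : lpT p →ₗ[ℂ] (V → ℂ))
    (hS : ∀ g : TreeAut, g t = t → ∀ x : lpT p,
      S (lam p g.toEquiv x) = lamFull g.toEquiv (S x)) :
    ∀ x : lpT p, (x : V → ℂ) t = 0 → S x t = 0 := by
  haveI : Fact (1 ≤ p) := ⟨hp.le⟩
  intro x hx
  obtain ⟨y₁, y₂, y₃, y₄, hdecomp⟩ := span_all hp t x hx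
  have key : ∀ (e : Equiv.Perm ℕ) (y : lpT p), S (y - lam p (conjEquiv t e) y) t = 0 := by
    intro e y
    rw [map_sub]
    have hg := hS (conjAut t e) (conjAut_fixes t e) y
    rw [conjAut_toEquiv] at hg
    rw [hg]
    have hval : (lamFull (conjEquiv t e) (S y)) t = S y t := by
      show S y ((conjEquiv t e).symm t) = S y t
      rw [conjEquiv_symm, conjEquiv_fixes]
    rw [Pi.sub_apply, hval, sub_self]
  rw [hdecomp, map_add, map_add, map_add]
  simp only [Pi.add_apply]
  rw [key, key, key, key]
  norm_num

/-- For `1 < p ≤ ∞`, every linear operator `S : ℓ_p(T) → ℂ^T` commuting with `λ(g)` for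
all `g` in the stabiliser `Aut(T, t)` maps `ℓ_p(T \ {t})` into `ℂ^{T \ {t}}`;
consequently `ℓ_p(T \ {t})` is the unique `λ(Aut(T, t))`-invariant linear complement of
`ℂ·𝟙_t` in `ℓ_p(T)`. -/
theorem stabiliser_commutant_lemma (t : V) (p : ℝ≥0∞) (hp : 1 < p)
    (S : lpT p →ₗ[ℂ] (V → ℂ))
    (hS : ∀ g : TreeAut, g t = t → ∀ x : lpT p,
      S (lam p g.toEquiv x) = lamFull g.toEquiv (S x)) :
    (∀ x : lpT p, (x : V → ℂ) t = 0 → S x t = 0) ∧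
    ∀ W : Submodule ℂ (lpT p),
      (∀ g : TreeAut, g t = t → ∀ x ∈ W, lam p g.toEquiv x ∈ W) →
      IsCompl W (Submodule.span ℂ {lp.single p t (1 : ℂ)}) →
      ∀ x : lpT p, x ∈ W ↔ (x : V → ℂ) t = 0 := by
  haveI : Fact (1 ≤ p) := ⟨hp.le⟩
  refine ⟨part1 t p hp S hS, ?_⟩
  intro W hW hcompl x
  set D := Submodule.span ℂ {(lp.single p t (1 : ℂ) : lpT p)} with hD
  -- `λ(g)` fixes the delta function at `t`
  have hlamdelta : ∀ g : TreeAut, g t = t →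
      lam p g.toEquiv (lp.single p t (1 : ℂ)) = lp.single p t (1 : ℂ) := by
    intro g hg
    have hgt : g.toEquiv t = t := hg
    apply lp.ext
    funext v
    rw [lam_apply]
    have hsymm : g.toEquiv.symm v = t ↔ v = t := by
      rw [Equiv.symm_apply_eq, hgt]
    by_cases hv : v = t
    · subst hv
      rw [hsymm.2 rfl]
    · rw [lp.single_apply_ne p t _ (fun h => hv (hsymm.1 h)),
        lp.single_apply_ne p t _ hv]
  -- the projection onto D along W
  set π : lpT p →ₗ[ℂ] D := D.linearProjOfIsCompl W hcompl.symm with hπ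
  -- the commutant operator given by the projection
  set S₀ : lpT p →ₗ[ℂ] (V → ℂ) :=
    { toFun := fun z => ((π z : lpT p) : V → ℂ)
      map_add' := fun a b => by
        show ((π (a + b) : lpT p) : V → ℂ) = ((π a : lpT p) : V → ℂ) + ((π b : lpT p) : V → ℂ)
        rw [map_add, Submodule.coe_add, lp.coeFn_add]
      map_smul' := fun c a => by
        show ((π (c • a) : lpT p) : V → ℂ) = c • ((π a : lpT p) : V → ℂ)
        rw [map_smul, Submodule.coe_smul, lp.coeFn_smul] } with hS₀def
  have hS₀ : ∀ g : TreeAut, g t = t → ∀ z : lpT p,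
      S₀ (lam p g.toEquiv z) = lamFull g.toEquiv (S₀ z) := by
    intro g hg z
    have hdec := Submodule.projection_add_projection_eq_self hcompl z
    set w := W.linearProjOfIsCompl D hcompl z with hw
    set d := π z with hd
    have hlz : lam p g.toEquiv z = lam p g.toEquiv ↑w + lam p g.toEquiv ↑d := by
      rw [← map_add]
      congr 1
      exact hdec.symm
    have hmemd : lam p g.toEquiv (↑d : lpT p) ∈ D := by
      obtain ⟨c, hc⟩ := Submodule.mem_span_singleton.1 d.2
      rw [← hc, map_smul]
      exact D.smul_mem c (by rw [hlamdelta g hg]; exact Submodule.mem_span_singleton_self _)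
    have hπw : π (lam p g.toEquiv ↑w) = 0 :=
      Submodule.projectionOnto_apply_of_mem_right hcompl.symm (hW g hg ↑w w.2)
    have hπd : π (lam p g.toEquiv ↑d) = ⟨lam p g.toEquiv ↑d, hmemd⟩ :=
      Submodule.linearProjOfIsCompl_apply_left hcompl.symm ⟨lam p g.toEquiv ↑d, hmemd⟩
    have hπz : π (lam p g.toEquiv z) = ⟨lam p g.toEquiv ↑d, hmemd⟩ := by
      rw [hlz, map_add, hπw, hπd, zero_add]
    show ((π (lam p g.toEquiv z) : lpT p) : V → ℂ) = lamFull g.toEquiv ((π z : lpT p) : V → ℂ)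
    rw [hπz]
    rfl
  have hK : ∀ z : lpT p, (z : V → ℂ) t = 0 → z ∈ W := by
    intro z hz
    have h0 := part1 t p hp S₀ hS₀ z hz
    obtain ⟨c, hc⟩ := Submodule.mem_span_singleton.1 (π z).2
    have hSz : S₀ z t = c := by
      show ((π z : lpT p) : V → ℂ) t = c
      rw [← hc, lp.coeFn_smul, Pi.smul_apply, smul_eq_mul, lp.single_apply_self, mul_one]
    have hc0 : c = 0 := by rw [← hSz, h0]
    have hπz0 : π z = 0 := by
      apply Subtype.ext
      rw [← hc, hc0, zero_smul]
      rfl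
    exact (Submodule.linearProjOfIsCompl_apply_eq_zero_iff hcompl.symm).1 hπz0
  constructor
  · intro hxW
    by_contra hxt
    set z : lpT p := lp.single p t (1 : ℂ) - ((x : V → ℂ) t)⁻¹ • x with hzdef
    have hzt : (z : V → ℂ) t = 0 := by
      rw [hzdef, lp.coeFn_sub, Pi.sub_apply, lp.coeFn_smul, Pi.smul_apply, smul_eq_mul,
        lp.single_apply_self, inv_mul_cancel₀ hxt, sub_self]
    have hzW : z ∈ W := hK z hzt
    have hdeltaW : lp.single p t (1 : ℂ) ∈ W := by
      have : lp.single p t (1 : ℂ) = z + ((x : V → ℂ) t)⁻¹ • x := by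
        rw [hzdef, sub_add_cancel]
      rw [this]
      exact W.add_mem hzW (W.smul_mem _ hxW)
    have hdeltaD : lp.single p t (1 : ℂ) ∈ D := Submodule.mem_span_singleton_self _
    have hzero : lp.single p t (1 : ℂ) = 0 :=
      (Submodule.disjoint_def.1 hcompl.disjoint) _ hdeltaW hdeltaD
    have h1 : ((lp.single p t (1 : ℂ)) : V → ℂ) t = 1 := lp.single_apply_self p t 1
    rw [hzero] at h1
    simp at h1
  · exact hK x
end
end

section
/- Let T be the ℵ₀-regular tree with fixed root e, and L : ℓ₁(T) → ℓ₁(T) the bounded operator with L(𝟙_s) = 𝟙_{ŝ} for s ≠ e and L(𝟙_e) = 0, where ŝ is the parent of s. Let N : ℓ₁(T) → ℓ_∞(T) be given by N(𝟙_s) = Σ_{t neighbour of s} 𝟙_t. Then L* + L = N as operators ℓ₁(T) → ℓ_∞(T), N commutes with λ(g) for every g ∈ Aut(T), and consequently λ(g)L − Lλ(g) = L*λ(g) − λ(g)L* on ℓ₁(T) for every g ∈ Aut(T). -/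
open scoped ENNReal

noncomputable section

attribute [local instance] Classical.propDecidable

/-- The fixed root `e` of the tree. -/
def root : V := 1

/-- `ŝ`: the parent of the vertex `s`, i.e. the penultimate vertex on the geodesic from
the root `e` to `s` (with `ê = e`), obtained by dropping the last letter of the reduced
word `s`. -/
def parent (s : V) : V := FreeGroup.mk s.toWord.dropLast

/-- The adjoint `L*` of the parent operator `L`, as an operator on `ℂ^T`:
`(L* y)(s) = y(ŝ)` for `s ≠ e` and `(L* y)(e) = 0`; equivalently `L*(𝟙_s) = Σ_{t̂ = s} 𝟙_t`. -/
def Lstar : (V → ℂ) →ₗ[ℂ] (V → ℂ) where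
  toFun x := fun v => if v = root then 0 else x (parent v)
  map_add' x y := by
    funext v; by_cases h : v = root <;> simp [h]
  map_smul' c x := by
    funext v; by_cases h : v = root <;> simp [h]

/-! ### Auxiliary lemmas -/

section Aux

open FreeGroup

lemma red_of_reduced {w u : List (ℕ × Bool)} (hw : reduce w = w) (h : Red w u) : w = u := by
  have h2 : Red (reduce w) u := by rwa [hw]
  have := reduce.min h2
  rwa [hw] at this

lemma reduce_prefix {w t : List (ℕ × Bool)} (hw : reduce (w ++ t) = w ++ t) :
    reduce w = w := by
  have h1 : Red (w ++ t) (reduce w ++ t) :=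
    Red.append_append reduce.red Relation.ReflTransGen.refl
  have h2 := red_of_reduced hw h1
  exact (List.append_cancel_right h2).symm

lemma toWord_parent (v : V) : (parent v).toWord = v.toWord.dropLast := by
  rw [parent, toWord_mk]
  rcases eq_or_ne v.toWord [] with h | h
  · simp [h]
  · exact reduce_prefix (t := [v.toWord.getLast h])
      (by rw [List.dropLast_append_getLast h]; exact reduce_toWord v)

lemma toWord_eq_nil_iff_root (v : V) : v.toWord = [] ↔ v = root := by
  constructor
  · intro h
    have : v.toWord = (1 : FreeGroup ℕ).toWord := by rw [h, toWord_one]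
    exact toWord_injective this
  · intro h; rw [h]; exact toWord_one

lemma parent_length_lt (v : V) (hv : v ≠ root) :
    (parent v).toWord.length < v.toWord.length := by
  have h : v.toWord ≠ [] := fun h0 => hv ((toWord_eq_nil_iff_root v).1 h0)
  rw [toWord_parent, List.length_dropLast]
  have : 0 < v.toWord.length := List.length_pos_of_ne_nil h
  omega

lemma parent_ne (v : V) (hv : v ≠ root) : parent v ≠ v := by
  intro h
  have := parent_length_lt v hv
  rw [h] at this
  exact lt_irrefl _ this

lemma not_both_parent {s v : V} :
    ¬((v ≠ root ∧ parent v = s) ∧ (s ≠ root ∧ parent s = v)) := by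
  rintro ⟨⟨hv, h1⟩, hs, h2⟩
  have l1 := parent_length_lt v hv
  have l2 := parent_length_lt s hs
  rw [h1] at l1
  rw [h2] at l2
  exact lt_asymm l1 l2

lemma reduce_concat_cancel {w : List (ℕ × Bool)} (hw : reduce w = w) {x : ℕ × Bool}
    (h : w.getLast? = some (x.1, !x.2)) : reduce (w ++ [x]) = w.dropLast := by
  have hw' : w.dropLast ++ [(x.1, !x.2)] = w :=
    List.dropLast_append_getLast? _ (by simp [h])
  have hstep : Red.Step (w ++ [x]) (w.dropLast ++ []) := by
    have he : w ++ [x] = w.dropLast ++ (x.1, !x.2) :: (x.1, !(!x.2)) :: [] := by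
      rw [Bool.not_not]
      rw [← hw']
      simp
    rw [he]
    exact Red.Step.not
  have h2 := reduce.Step.eq hstep
  rw [List.append_nil] at h2
  rw [h2]
  exact reduce_prefix (t := [(x.1, !x.2)]) (by rw [hw']; exact hw)

lemma invRev_concat (w : List (ℕ × Bool)) (x : ℕ × Bool) :
    invRev (w ++ [x]) = (x.1, !x.2) :: invRev w := by
  simp [invRev]

lemma reduce_concat_noncancel {w : List (ℕ × Bool)} (hw : reduce w = w) {x : ℕ × Bool}
    (h : w.getLast? ≠ some (x.1, !x.2)) : reduce (w ++ [x]) = w ++ [x] := by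
  have key : reduce (w ++ [x]) = invRev (reduce (invRev (w ++ [x]))) := by
    rw [reduce_invRev, invRev_invRev]
  rcases List.eq_nil_or_concat w with rfl | ⟨u, y, rfl⟩
  · simp
  · simp only [List.concat_eq_append] at hw h key ⊢
    have hy : y ≠ (x.1, !x.2) := by
      intro hxy; exact h (by simp [hxy])
    have hredinv : reduce (invRev (u ++ [y])) = invRev (u ++ [y]) := by
      rw [reduce_invRev, hw]
    have hcond : ¬((x.1, !x.2).1 = (y.1, !y.2).1 ∧ (x.1, !x.2).2 = !(y.1, !y.2).2) := by
      rintro ⟨h1, h2⟩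
      apply hy
      simp only [Bool.not_not] at h1 h2
      exact Prod.ext h1.symm (by rw [← h2])
    rw [key, invRev_concat, reduce.cons, hredinv, invRev_concat]
    simp only [if_neg hcond]
    rw [← invRev_concat, ← invRev_concat, invRev_invRev]

lemma mul_of_eq_mk (s : V) (i : ℕ) :
    s * FreeGroup.of i = FreeGroup.mk (s.toWord ++ [(i, true)]) := by
  rw [← FreeGroup.mul_mk, mk_toWord]
  rfl

lemma mul_of_cases (s : V) (i : ℕ) :
    ((s * FreeGroup.of i) ≠ root ∧ parent (s * FreeGroup.of i) = s) ∨
      (s ≠ root ∧ parent s = s * FreeGroup.of i) := by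
  by_cases hc : s.toWord.getLast? = some (i, false)
  · right
    have hs : s ≠ root := by
      intro h
      rw [h] at hc
      rw [show (root : V).toWord = [] from toWord_one] at hc
      simp at hc
    refine ⟨hs, ?_⟩
    apply toWord_injective
    rw [toWord_parent, mul_of_eq_mk, toWord_mk]
    rw [reduce_concat_cancel (reduce_toWord s) (x := ((i : ℕ), true)) (by simpa using hc)]
  · left
    have htw : (s * FreeGroup.of i).toWord = s.toWord ++ [(i, true)] := by
      rw [mul_of_eq_mk, toWord_mk]
      exact reduce_concat_noncancel (reduce_toWord s) (x := ((i : ℕ), true)) (by simpa using hc)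
    constructor
    · intro h
      rw [← toWord_eq_nil_iff_root] at h
      rw [htw] at h
      simp at h
    · apply toWord_injective
      rw [toWord_parent, htw, List.dropLast_concat]

lemma adj_parent (v : V) (hv : v ≠ root) : treeGraph.Adj (parent v) v := by
  have hne : v.toWord ≠ [] := fun h0 => hv ((toWord_eq_nil_iff_root v).1 h0)
  obtain ⟨y, hgl⟩ : ∃ y, v.toWord.getLast? = some y := by
    cases h : v.toWord.getLast? with
    | none => exact absurd (List.getLast?_eq_none_iff.1 h) hne
    | some y => exact ⟨y, rfl⟩
  have hsplit : v.toWord.dropLast ++ [y] = v.toWord :=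
    List.dropLast_append_getLast? _ (by simp [hgl])
  rw [treeGraph, SimpleGraph.fromRel_adj]
  refine ⟨parent_ne v hv, ?_⟩
  cases hb : y.2
  · -- last letter is an inverse generator: `parent v = v * of y.1`
    right
    refine ⟨y.1, ?_⟩
    apply toWord_injective
    rw [toWord_parent, mul_of_eq_mk, toWord_mk]
    refine (reduce_concat_cancel (reduce_toWord v) (x := (y.1, true)) ?_).symm
    rw [hgl]
    simp only [Bool.not_true]
    exact congrArg some (Prod.ext_iff.2 ⟨rfl, hb⟩)
  · -- last letter is a generator: `v = parent v * of y.1`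
    left
    refine ⟨y.1, ?_⟩
    apply toWord_injective
    rw [mul_of_eq_mk, toWord_mk, toWord_parent]
    have hyy : v.toWord.dropLast ++ [(y.1, true)] = v.toWord := by
      rw [← hsplit]
      congr 2
      exact (Prod.ext_iff.2 ⟨rfl, hb⟩ : y = (y.1, true)).symm
    rw [hyy, reduce_toWord]

lemma adj_iff (s v : V) :
    treeGraph.Adj s v ↔ (v ≠ root ∧ parent v = s) ∨ (s ≠ root ∧ parent s = v) := by
  constructor
  · intro h
    rw [treeGraph, SimpleGraph.fromRel_adj] at h
    obtain ⟨hne, h | h⟩ := h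
    · obtain ⟨i, rfl⟩ := h
      rcases mul_of_cases s i with ⟨h1, h2⟩ | ⟨h1, h2⟩
      · exact Or.inl ⟨h1, h2⟩
      · exact Or.inr ⟨h1, h2⟩
    · obtain ⟨i, rfl⟩ := h
      rcases mul_of_cases v i with ⟨h1, h2⟩ | ⟨h1, h2⟩
      · exact Or.inr ⟨h1, h2⟩
      · exact Or.inl ⟨h1, h2⟩
  · rintro (⟨h1, rfl⟩ | ⟨h1, rfl⟩)
    · exact adj_parent v h1
    · exact (adj_parent s h1).symm

/-! ### Analytic auxiliary material -/

/-- Evaluation at a point, as a continuous linear functional on `ℓ_p(T)`. -/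
def evalCLM (p : ℝ≥0∞) [Fact (1 ≤ p)] (hp : p ≠ 0) (v : V) : lpT p →L[ℂ] ℂ :=
  LinearMap.mkContinuous
    { toFun := fun x => x v
      map_add' := fun x y => by simp
      map_smul' := fun c x => by simp }
    1 (fun x => by rw [one_mul]; exact lp.norm_apply_le_norm hp x v)

@[simp] lemma evalCLM_apply (p : ℝ≥0∞) [Fact (1 ≤ p)] (hp : p ≠ 0) (v : V) (x : lpT p) :
    evalCLM p hp v x = x v := rfl

lemma single_coe (p : ℝ≥0∞) (s u : V) :
    (lp.single p s (1 : ℂ) : V → ℂ) u = if u = s then 1 else 0 := by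
  by_cases h : u = s
  · subst h; simp [lp.single_apply_self]
  · simp [lp.single_apply_ne p s _ h, h]

lemma clm_eq_on_singles (f₁ f₂ : lpT 1 →L[ℂ] ℂ)
    (h : ∀ s : V, f₁ (lp.single 1 s (1 : ℂ)) = f₂ (lp.single 1 s (1 : ℂ))) (x : lpT 1) :
    f₁ x = f₂ x := by
  have hs : HasSum (fun s : V => lp.single 1 s (x s)) x :=
    lp.hasSum_single (by simp) x
  have key : ∀ s : V, f₁ (lp.single 1 s (x s)) = f₂ (lp.single 1 s (x s)) := by
    intro s
    have h1 : lp.single 1 s (x s) = (x s) • (lp.single 1 s (1 : ℂ) : lpT 1) := by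
      rw [← lp.single_smul]
      norm_num
    rw [h1, map_smul, map_smul, h]
  have H1 := hs.mapL f₁
  have H2 := hs.mapL f₂
  refine H1.unique ?_
  simpa only [key] using H2

lemma lam_norm (g : V ≃ V) (x : lpT 1) : ‖lam 1 g x‖ = ‖x‖ := by
  have h1 : (0:ℝ) < (1 : ℝ≥0∞).toReal := by simp
  rw [lp.norm_eq_tsum_rpow h1 (lam 1 g x), lp.norm_eq_tsum_rpow h1 x]
  congr 1
  exact g.symm.tsum_eq (f := fun v => ‖x v‖ ^ (1 : ℝ≥0∞).toReal)

/-- The shift representation on `ℓ₁(T)` as a continuous linear map. -/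
def lamCLM (g : V ≃ V) : lpT 1 →L[ℂ] lpT 1 :=
  LinearMap.mkContinuous (lam 1 g) 1 (fun x => by rw [lam_norm, one_mul])

@[simp] lemma lamCLM_apply (g : V ≃ V) (x : lpT 1) : lamCLM g x = lam 1 g x := rfl

lemma lam_single (g : V ≃ V) (s : V) :
    lam 1 g (lp.single 1 s (1 : ℂ)) = lp.single 1 (g s) (1 : ℂ) := by
  apply Subtype.ext
  funext u
  show (lp.single 1 s (1 : ℂ) : V → ℂ) (g.symm u) = (lp.single 1 (g s) (1 : ℂ) : V → ℂ) u
  rw [single_coe, single_coe]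
  simp [Equiv.symm_apply_eq]

end Aux

/-- Let `L : ℓ₁(T) → ℓ₁(T)` be the bounded operator with `L(𝟙_s) = 𝟙_{ŝ}` for `s ≠ e`
and `L(𝟙_e) = 0`, and let `N : ℓ₁(T) → ℓ_∞(T)` be given by
`N(𝟙_s) = Σ_{t neighbour of s} 𝟙_t`.  Then `L* + L = N` as operators `ℓ₁(T) → ℓ_∞(T)`,
`N` commutes with `λ(g)` for every `g ∈ Aut(T)`, and consequently
`λ(g)L − Lλ(g) = L*λ(g) − λ(g)L*` on `ℓ₁(T)` for every `g ∈ Aut(T)`. -/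
theorem Lstar_add_L_eq_N_and_commutation
    (L : lpT 1 →L[ℂ] lpT 1)
    (hL : ∀ s : V, s ≠ root → L (lp.single 1 s (1 : ℂ)) = lp.single 1 (parent s) (1 : ℂ))
    (hLe : L (lp.single 1 root (1 : ℂ)) = 0)
    (N : lpT 1 →L[ℂ] lpT ∞)
    (hN : ∀ s v : V, (N (lp.single 1 s (1 : ℂ)) : V → ℂ) v
      = if treeGraph.Adj s v then 1 else 0) :
    (∀ x : lpT 1, Lstar (x : V → ℂ) + ((L x : lpT 1) : V → ℂ) = ((N x : lpT ∞) : V → ℂ)) ∧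
    (∀ g : TreeAut, ∀ x : lpT 1,
      ((N (lam 1 g.toEquiv x) : lpT ∞) : V → ℂ)
        = lamFull g.toEquiv ((N x : lpT ∞) : V → ℂ)) ∧
    (∀ g : TreeAut, ∀ x : lpT 1,
      lamFull g.toEquiv ((L x : lpT 1) : V → ℂ) - ((L (lam 1 g.toEquiv x) : lpT 1) : V → ℂ)
        = Lstar (lamFull g.toEquiv (x : V → ℂ)) - lamFull g.toEquiv (Lstar (x : V → ℂ))) := by
  -- Part 1, pointwise.
  have part1 : ∀ (x : lpT 1) (v : V),
      Lstar (x : V → ℂ) v + ((L x : lpT 1) : V → ℂ) v = ((N x : lpT ∞) : V → ℂ) v := by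
    intro x v
    have hsingles : ∀ s : V,
        ((if v = root then (0 : lpT 1 →L[ℂ] ℂ) else evalCLM 1 one_ne_zero (parent v)) +
          (evalCLM 1 one_ne_zero v).comp L) (lp.single 1 s (1 : ℂ))
        = ((evalCLM ∞ ENNReal.top_ne_zero v).comp N) (lp.single 1 s (1 : ℂ)) := by
      intro s
      simp only [ContinuousLinearMap.add_apply, ContinuousLinearMap.comp_apply, evalCLM_apply]
      rw [apply_ite (fun f : lpT 1 →L[ℂ] ℂ => f (lp.single 1 s (1 : ℂ)))]
      simp only [ContinuousLinearMap.zero_apply, evalCLM_apply]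
      rw [hN]
      by_cases hs : s = root
      · subst hs
        rw [hLe]
        simp only [lp.coeFn_zero, Pi.zero_apply, add_zero]
        rw [single_coe]
        by_cases hv : v = root
        · rw [if_pos hv, if_neg]
          rw [hv]
          exact treeGraph.irrefl
        · rw [if_neg hv]
          by_cases hp : parent v = root
          · rw [if_pos hp, if_pos ((adj_iff _ _).2 (Or.inl ⟨hv, hp⟩))]
          · rw [if_neg hp, if_neg]
            intro hadj
            rcases (adj_iff _ _).1 hadj with ⟨_, h2⟩ | ⟨h1, _⟩
            · exact hp h2
            · exact h1 rfl
      · rw [hL s hs, single_coe, single_coe]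
        by_cases hv : v = root
        · rw [if_pos hv]
          by_cases hp : v = parent s
          · rw [if_pos hp, if_pos ((adj_iff _ _).2 (Or.inr ⟨hs, hp.symm⟩)), zero_add]
          · rw [if_neg hp, if_neg, add_zero]
            intro hadj
            rcases (adj_iff _ _).1 hadj with ⟨h1, _⟩ | ⟨_, h2⟩
            · exact h1 hv
            · exact hp h2.symm
        · rw [if_neg hv]
          by_cases hp1 : parent v = s
          · rw [if_pos hp1, if_pos ((adj_iff _ _).2 (Or.inl ⟨hv, hp1⟩)), if_neg, add_zero]
            intro hp2
            exact not_both_parent ⟨⟨hv, hp1⟩, hs, hp2.symm⟩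
          · rw [if_neg hp1]
            by_cases hp2 : v = parent s
            · rw [if_pos hp2, if_pos ((adj_iff _ _).2 (Or.inr ⟨hs, hp2.symm⟩)), zero_add]
            · rw [if_neg hp2, if_neg, add_zero]
              intro hadj
              rcases (adj_iff _ _).1 hadj with ⟨_, h2⟩ | ⟨_, h2⟩
              · exact hp1 h2
              · exact hp2 h2.symm
    have key := clm_eq_on_singles _ _ hsingles x
    simp only [ContinuousLinearMap.add_apply, ContinuousLinearMap.comp_apply,
      evalCLM_apply] at key
    rw [apply_ite (fun f : lpT 1 →L[ℂ] ℂ => f x)] at key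
    simp only [ContinuousLinearMap.zero_apply, evalCLM_apply] at key
    exact key
  -- Part 2, pointwise.
  have part2 : ∀ (g : TreeAut) (x : lpT 1) (v : V),
      ((N (lam 1 g.toEquiv x) : lpT ∞) : V → ℂ) v
        = ((N x : lpT ∞) : V → ℂ) (g.toEquiv.symm v) := by
    intro g x v
    have hiff : ∀ s : V, treeGraph.Adj (g.toEquiv s) v ↔ treeGraph.Adj s (g.toEquiv.symm v) := by
      intro s
      have h1 := g.map_rel_iff (a := s) (b := g.toEquiv.symm v)
      rw [show g (g.toEquiv.symm v) = v from g.toEquiv.apply_symm_apply v] at h1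
      exact h1
    have hsingles : ∀ s : V,
        ((evalCLM ∞ ENNReal.top_ne_zero v).comp (N.comp (lamCLM g.toEquiv)))
            (lp.single 1 s (1 : ℂ))
        = ((evalCLM ∞ ENNReal.top_ne_zero (g.toEquiv.symm v)).comp N) (lp.single 1 s (1 : ℂ)) := by
      intro s
      simp only [ContinuousLinearMap.comp_apply, evalCLM_apply, lamCLM_apply]
      rw [lam_single, hN, hN]
      exact if_congr (hiff s) rfl rfl
    have key := clm_eq_on_singles _ _ hsingles x
    simpa only [ContinuousLinearMap.comp_apply, evalCLM_apply, lamCLM_apply] using key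
  refine ⟨?_, ?_, ?_⟩
  · intro x
    funext v
    exact part1 x v
  · intro g x
    funext v
    exact part2 g x v
  · intro g x
    funext v
    have a := part1 x (g.toEquiv.symm v)
    have b := part1 (lam 1 g.toEquiv x) v
    have c := part2 g x v
    show ((L x : lpT 1) : V → ℂ) (g.toEquiv.symm v)
          - ((L (lam 1 g.toEquiv x) : lpT 1) : V → ℂ) v
        = Lstar ((lam 1 g.toEquiv x : lpT 1) : V → ℂ) v - Lstar (x : V → ℂ) (g.toEquiv.symm v)
    linear_combination a - b - c
end
end
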